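/- Let a, ρ, γ₁ be real numbers with 0 < ρ < a and γ₁ > 0, let γ₂ = ((a³+ρ³)/(a³−ρ³))·γ₁ (the compatibility condition), and set α = (γ₁γ₂/2)(1/ρ² − 1/a²), β = (γ₁γ₂/2)(1/ρ² + 1/a²), δ₁ = γ₁²/(a−ρ)², δ₂ = γ₂²/(a+ρ)². Let M be the symmetric 4×4 real matrix M = [[−α, 0, α, 0], [0, δ₁+α, 0, −β], [α, 0, −α, 0], [0, −β, 0, δ₂+α]]. Then, counted with algebraic multiplicity, M has exactly one negative eigenvalue (namely −2α), 0 is an eigenvalue of multiplicity exactly one, and the remaining two eigenvalues are strictly positive. -/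
import Mathlib

set_option maxHeartbeats 1000000


open Real Matrix Polynomial

/-- Under the compatibility condition, the point-vortex block `M` of the second variation
of the augmented Hamiltonian has, counted with algebraic multiplicity, exactly one
negative eigenvalue (namely `−2α`), a simple zero eigenvalue, and two strictly positive
eigenvalues. -/
theorem vortex_block_spectrum
    (a ρ γ₁ γ₂ α β δ₁ δ₂ : ℝ) (hρ : 0 < ρ) (hρa : ρ < a) (hγ₁ : 0 < γ₁)
    (hcompat : γ₂ = ((a ^ 3 + ρ ^ 3) / (a ^ 3 - ρ ^ 3)) * γ₁)
    (hα : α = (γ₁ * γ₂ / 2) * (1 / ρ ^ 2 - 1 / a ^ 2))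
    (hβ : β = (γ₁ * γ₂ / 2) * (1 / ρ ^ 2 + 1 / a ^ 2))
    (hδ₁ : δ₁ = γ₁ ^ 2 / (a - ρ) ^ 2)
    (hδ₂ : δ₂ = γ₂ ^ 2 / (a + ρ) ^ 2)
    (M : Matrix (Fin 4) (Fin 4) ℝ)
    (hM : M = !![-α, 0, α, 0;
                  0, δ₁ + α, 0, -β;
                  α, 0, -α, 0;
                  0, -β, 0, δ₂ + α]) :
    M.charpoly.roots.filter (fun x => x < 0) = {-(2 * α)} ∧
    M.charpoly.rootMultiplicity 0 = 1 ∧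
    (M.charpoly.roots.filter (fun x => 0 < x)).card = 2 := by
  have ha : 0 < a := hρ.trans hρa
  have hsub : 0 < a - ρ := sub_pos.2 hρa
  have hadd : 0 < a + ρ := by linarith
  have hcube : 0 < a ^ 3 - ρ ^ 3 := by
    have h := mul_pos hsub (show (0:ℝ) < a ^ 2 + a * ρ + ρ ^ 2 by positivity)
    nlinarith [h]
  have hγ₂ : 0 < γ₂ := by
    rw [hcompat]
    have h1 : 0 < a ^ 3 + ρ ^ 3 := by positivity
    exact mul_pos (div_pos h1 hcube) hγ₁
  have hsq : ρ ^ 2 < a ^ 2 := by nlinarith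
  have h1 : (0:ℝ) < 1 / ρ ^ 2 - 1 / a ^ 2 := by
    rw [sub_pos]
    exact one_div_lt_one_div_of_lt (by positivity) hsq
  have hαpos : 0 < α := by
    rw [hα]; exact mul_pos (by positivity) h1
  have hδ₁pos : 0 < δ₁ := by rw [hδ₁]; positivity
  have hδ₂pos : 0 < δ₂ := by rw [hδ₂]; positivity
  -- trace and determinant of the positive 2×2 block
  set T : ℝ := δ₁ + δ₂ + 2 * α with hT
  set Dd : ℝ := (δ₁ + α) * (δ₂ + α) - β ^ 2 with hDd
  have hTpos : 0 < T := by rw [hT]; linarith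
  have hDval : Dd = 3 * γ₁ ^ 4 * (a ^ 6 - a ^ 5 * ρ + a ^ 3 * ρ ^ 3 - a * ρ ^ 5 + ρ ^ 6) /
      ((a - ρ) * (a ^ 3 - ρ ^ 3) ^ 3) := by
    rw [hDd, hα, hβ, hδ₁, hδ₂, hcompat]
    have h2 : ρ ≠ 0 := ne_of_gt hρ
    have h3 : a ≠ 0 := ne_of_gt ha
    have h4 : a - ρ ≠ 0 := ne_of_gt hsub
    have h5 : a + ρ ≠ 0 := ne_of_gt hadd
    have h6 : a ^ 3 - ρ ^ 3 ≠ 0 := ne_of_gt hcube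
    field_simp
    ring
  have hDpos : 0 < Dd := by
    rw [hDval]
    apply div_pos
    · have hP : a ^ 6 - a ^ 5 * ρ + a ^ 3 * ρ ^ 3 - a * ρ ^ 5 + ρ ^ 6 =
          a ^ 5 * (a - ρ) + a * ρ ^ 3 * ((a - ρ) * (a + ρ)) + ρ ^ 6 := by ring
      nlinarith [mul_pos (pow_pos ha 5) hsub, mul_pos (mul_pos ha (pow_pos hρ 3))
        (mul_pos hsub hadd), pow_pos hρ 6, pow_pos hγ₁ 4]
    · positivity
  have hdisc : 0 ≤ T ^ 2 - 4 * Dd := by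
    have : T ^ 2 - 4 * Dd = (δ₁ - δ₂) ^ 2 + (2 * β) ^ 2 := by rw [hT, hDd]; ring
    rw [this]; positivity
  set s : ℝ := Real.sqrt (T ^ 2 - 4 * Dd) with hs
  have hs2 : s ^ 2 = T ^ 2 - 4 * Dd := Real.sq_sqrt hdisc
  have hs0 : 0 ≤ s := Real.sqrt_nonneg _
  have hsT : s < T := by
    have h2 : s ^ 2 < T ^ 2 := by rw [hs2]; linarith
    exact lt_of_pow_lt_pow_left₀ 2 hTpos.le h2
  set r₁ : ℝ := (T - s) / 2 with hr₁def
  set r₂ : ℝ := (T + s) / 2 with hr₂def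
  have hr₁pos : 0 < r₁ := by rw [hr₁def]; linarith
  have hr₂pos : 0 < r₂ := by rw [hr₂def]; linarith
  have hsum : r₁ + r₂ = T := by rw [hr₁def, hr₂def]; ring
  have hprod : r₁ * r₂ = Dd := by
    have h2 : r₁ * r₂ = (T ^ 2 - s ^ 2) / 4 := by rw [hr₁def, hr₂def]; ring
    rw [h2, hs2]; ring
  -- the characteristic polynomial
  have hchar : M.charpoly = X * (X + C (2 * α)) * (X ^ 2 - C T * X + C Dd) := by
    rw [hM, Matrix.charpoly]
    have hcm : charmatrix (!![-α, 0, α, 0; 0, δ₁ + α, 0, -β; α, 0, -α, 0; 0, -β, 0, δ₂ + α] :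
        Matrix (Fin 4) (Fin 4) ℝ)
        = !![X + C α, 0, -C α, 0; 0, X - C (δ₁ + α), 0, C β;
             -C α, 0, X + C α, 0; 0, C β, 0, X - C (δ₂ + α)] := by
      ext i j
      fin_cases i <;> fin_cases j <;>
        simp [charmatrix_apply, Matrix.diagonal_apply]
    rw [hcm, Matrix.det_succ_row_zero]
    simp only [Fin.sum_univ_succ, Fin.sum_univ_zero, Matrix.submatrix_apply, Fin.succ_zero_eq_one,
      Fin.succ_one_eq_two, Matrix.cons_val', Matrix.cons_val_zero, Matrix.cons_val_one,
      Matrix.head_cons, Matrix.empty_val', Matrix.cons_val_fin_one, Fin.succAbove_zero,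
      Matrix.det_fin_three, Matrix.cons_val_two, Matrix.tail_cons, Matrix.cons_val_three]
    norm_num [Fin.succAbove, Fin.lt_def, hT, hDd]
    push_cast [map_add, _root_.map_mul, map_sub, map_ofNat]
    ring
  have hfact : M.charpoly =
      (Multiset.map (fun t : ℝ => X - C t) ({0, -(2 * α), r₁, r₂} : Multiset ℝ)).prod := by
    have hquad : X ^ 2 - C T * X + C Dd = (X - C r₁) * (X - C r₂) := by
      rw [← hsum, ← hprod, C_add, C_mul]; ring
    rw [hchar, hquad]
    simp only [Multiset.insert_eq_cons, Multiset.map_cons, Multiset.map_singleton,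
      Multiset.prod_cons, Multiset.prod_singleton, map_neg, map_zero]
    ring
  have hroots : M.charpoly.roots = ({0, -(2 * α), r₁, r₂} : Multiset ℝ) := by
    rw [hfact]; exact roots_multiset_prod_X_sub_C _
  have hn1 : ¬ (0:ℝ) < 0 := lt_irrefl 0
  have hneg : -(2 * α) < 0 := by linarith
  have hnneg : ¬ (0:ℝ) < -(2 * α) := by linarith
  have hnr₁ : ¬ r₁ < 0 := not_lt.2 hr₁pos.le
  have hnr₂ : ¬ r₂ < 0 := not_lt.2 hr₂pos.le
  refine ⟨?_, ?_, ?_⟩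
  · rw [hroots]
    simp only [Multiset.insert_eq_cons, Multiset.filter_cons, Multiset.filter_singleton,
      hn1, hneg, hnr₁, hnr₂, if_true, if_false, if_pos, if_neg, not_false_iff]
    simp [hn1, hneg, hnr₁, hnr₂]
  · rw [← Polynomial.count_roots, hroots]
    have h2 : -(2 * α) ≠ 0 := ne_of_lt hneg
    have h3 : r₁ ≠ 0 := ne_of_gt hr₁pos
    have h4 : r₂ ≠ 0 := ne_of_gt hr₂pos
    simp [Multiset.insert_eq_cons, Multiset.count_cons, h2, h3, h4,
      (fun h => h2 h.symm : ¬ (0:ℝ) = -(2*α)), (fun h => h3 h.symm : ¬ (0:ℝ) = r₁),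
      (fun h => h4 h.symm : ¬ (0:ℝ) = r₂), hαpos.ne', hr₁pos.ne, hr₂pos.ne]
  · rw [hroots]
    simp [Multiset.insert_eq_cons, Multiset.filter_cons, Multiset.filter_singleton, hn1, hnneg, hr₁pos, hr₂pos]
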